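/- Let P and Q be two disjoint, nonempty, closed subsets of Euclidean space ℝ^d. Then for every integer k ≥ 2 there exists at least one distance k-sector of P and Q, i.e., a (k−1)-tuple (C_1, …, C_{k−1}) of nonempty subsets of ℝ^d such that C_i = bisect(C_{i−1}, C_{i+1}) for every i = 1, …, k−1, where C_0 = P and C_k = Q. -/

import Mathlib

open Metric Set

/-- The bisector of two sets: points equidistant from `X` and `Y`. -/
def bisect {d : ℕ} (X Y : Set (EuclideanSpace ℝ (Fin d))) : Set (EuclideanSpace ℝ (Fin d)) :=
  {z | infDist z X = infDist z Y}

open EMetric in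
/-- Crossing lemma: a segment from a point of `A` to a point of `B`, where `A, B` are closed
and cover the space, must contain a point of `A ∩ B`; moreover it is not farther from the
start than the endpoint, with equality only at the endpoint. -/
private lemma seg_cross {d : ℕ} {A B : Set (EuclideanSpace ℝ (Fin d))}
    (hA : IsClosed A) (hB : IsClosed B) (hAB : A ∪ B = univ)
    {x y : EuclideanSpace ℝ (Fin d)} (hx : x ∈ A) (hy : y ∈ B) :
    ∃ e ∈ A ∩ B, dist x e ≤ dist x y ∧ (dist x y ≤ dist x e → e = y) := by
  have hconn : IsPreconnected (segment ℝ x y) := (convex_segment x y).isPreconnected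
  obtain ⟨e, hseg, heA, heB⟩ := isPreconnected_closed_iff.mp hconn A B hA hB
    (fun z _ => by rw [hAB]; trivial)
    ⟨x, left_mem_segment ℝ x y, hx⟩ ⟨y, right_mem_segment ℝ x y, hy⟩
  obtain ⟨a, b, ha, hb, hab, rfl⟩ := hseg
  have ha' : a = 1 - b := by linarith
  subst ha'
  have key : x - ((1 - b) • x + b • y) = b • (x - y) := by
    rw [smul_sub, sub_smul, one_smul]; abel
  have hd : dist x ((1 - b) • x + b • y) = b * dist x y := by
    rw [dist_eq_norm, dist_eq_norm, key, norm_smul, Real.norm_of_nonneg hb]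
  have hb1 : b ≤ 1 := by linarith
  refine ⟨_, ⟨heA, heB⟩, ?_, ?_⟩
  · rw [hd]
    calc b * dist x y ≤ 1 * dist x y := by
          exact mul_le_mul_of_nonneg_right hb1 dist_nonneg
      _ = dist x y := one_mul _
  · intro hle
    rw [hd] at hle
    rcases eq_or_lt_of_le (dist_nonneg (x := x) (y := y)) with h0 | h0
    · have hxy : x = y := by rw [← dist_eq_zero]; exact h0.symm
      rw [← hxy, ← add_smul]
      module
    · have hb1' : 1 ≤ b := by
        by_contra hcon
        push_neg at hcon
        nlinarith
      have : b = 1 := le_antisymm hb1 hb1'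
      rw [this]; simp

open EMetric in
/-- If `A, B` are closed sets covering the space, then for `z ∈ A` the distance to `B`
equals the distance to `A ∩ B`. -/
private lemma infDist_inter_eq {d : ℕ} {A B : Set (EuclideanSpace ℝ (Fin d))}
    (hA : IsClosed A) (hB : IsClosed B) (hAB : A ∪ B = univ) (hBne : B.Nonempty)
    {z : EuclideanSpace ℝ (Fin d)} (hz : z ∈ A) :
    infDist z (A ∩ B) = infDist z B := by
  obtain ⟨y, hyB, hdy⟩ := hB.exists_infDist_eq_dist hBne z
  obtain ⟨e, heAB, hle, -⟩ := seg_cross hA hB hAB hz hyB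
  refine le_antisymm ?_ (infDist_le_infDist_of_subset inter_subset_right ⟨e, heAB⟩)
  calc infDist z (A ∩ B) ≤ dist z e := infDist_le_dist_of_mem heAB
    _ ≤ dist z y := hle
    _ = infDist z B := hdy.symm

open EMetric in
/-- The monotone operator whose fixed point yields the distance `k`-sector. -/
private def phi (d k : ℕ) (P Q : Set (EuclideanSpace ℝ (Fin d))) :
    ((ℕ → Set (EuclideanSpace ℝ (Fin d))) × (ℕ → Set (EuclideanSpace ℝ (Fin d)))ᵒᵈ) →o
      ((ℕ → Set (EuclideanSpace ℝ (Fin d))) × (ℕ → Set (EuclideanSpace ℝ (Fin d)))ᵒᵈ) where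
  toFun XY :=
    (fun i => if i = 0 then P else if i < k then
        {z | infEdist z (XY.1 (i - 1)) ≤ infEdist z (OrderDual.ofDual XY.2 (i + 1))} else univ,
      OrderDual.toDual (fun i => if i = 0 then univ else if i < k then
        {z | infEdist z (OrderDual.ofDual XY.2 (i + 1)) ≤ infEdist z (XY.1 (i - 1))} else Q))
  monotone' := by
    rintro ⟨X, Y⟩ ⟨X', Y'⟩ ⟨hX, hY⟩
    have hX' : ∀ i, X i ⊆ X' i := fun i => hX i
    have hY' : ∀ i, OrderDual.ofDual Y' i ⊆ OrderDual.ofDual Y i := fun i => hY i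
    constructor
    · intro i
      dsimp only
      split_ifs
      · exact le_rfl
      · intro z hz
        simp only [mem_setOf_eq] at hz ⊢
        exact le_trans (infEdist_anti (hX' _))
          (le_trans hz (infEdist_anti (hY' _)))
      · exact le_rfl
    · intro i
      show (if i = 0 then univ else if i < k then
          {z | infEdist z (OrderDual.ofDual Y' (i + 1)) ≤ infEdist z (X' (i - 1))} else Q) ≤
        (if i = 0 then univ else if i < k then
          {z | infEdist z (OrderDual.ofDual Y (i + 1)) ≤ infEdist z (X (i - 1))} else Q)
      split_ifs
      · exact le_rfl
      · intro z hz
        simp only [mem_setOf_eq] at hz ⊢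
        exact le_trans (infEdist_anti (hY' _))
          (le_trans hz (infEdist_anti (hX' _)))
      · exact le_rfl

open EMetric in
/-- Existence of distance `k`-sectors in Euclidean space `ℝ^d`. -/
theorem ksector_exists_euclidean {d : ℕ} (k : ℕ) (hk : 2 ≤ k)
    (P Q : Set (EuclideanSpace ℝ (Fin d))) (hPne : P.Nonempty) (hQne : Q.Nonempty)
    (hPcl : IsClosed P) (hQcl : IsClosed Q) (hPQ : Disjoint P Q) :
    ∃ C : ℕ → Set (EuclideanSpace ℝ (Fin d)), C 0 = P ∧ C k = Q ∧
      ∀ i, 0 < i → i < k →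
        (C i).Nonempty ∧ C i = bisect (C (i - 1)) (C (i + 1)) := by
  classical
  obtain ⟨p, hp⟩ := hPne
  obtain ⟨q, hq⟩ := hQne
  obtain ⟨F, hF⟩ : ∃ F, phi d k P Q F = F := ⟨_, OrderHom.map_lfp (phi d k P Q)⟩
  set XX : ℕ → Set (EuclideanSpace ℝ (Fin d)) := F.1 with hXXdef
  set YY : ℕ → Set (EuclideanSpace ℝ (Fin d)) := OrderDual.ofDual F.2 with hYYdef
  have hfst : ∀ i, XX i = if i = 0 then P else if i < k then
      {z | infEdist z (XX (i - 1)) ≤ infEdist z (YY (i + 1))} else univ := by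
    intro i
    conv_lhs => rw [hXXdef, ← hF]
    rfl
  have hsnd : ∀ i, YY i = if i = 0 then univ else if i < k then
      {z | infEdist z (YY (i + 1)) ≤ infEdist z (XX (i - 1))} else Q := by
    intro i
    conv_lhs => rw [hYYdef, ← hF]
    rfl
  have hX0 : XX 0 = P := by rw [hfst]; simp
  have hY0 : YY 0 = univ := by rw [hsnd]; simp
  have hXuniv : ∀ i, k ≤ i → XX i = univ := by
    intro i hi; rw [hfst, if_neg (by omega), if_neg (by omega)]
  have hYQ : ∀ i, k ≤ i → YY i = Q := by
    intro i hi; rw [hsnd, if_neg (by omega), if_neg (by omega)]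
  have hXe : ∀ i, 0 < i → i < k → XX i =
      {z | infEdist z (XX (i - 1)) ≤ infEdist z (YY (i + 1))} := by
    intro i h1 h2; rw [hfst, if_neg (by omega), if_pos h2]
  have hYe : ∀ i, 0 < i → i < k → YY i =
      {z | infEdist z (YY (i + 1)) ≤ infEdist z (XX (i - 1))} := by
    intro i h1 h2; rw [hsnd, if_neg (by omega), if_pos h2]
  have hXcl : ∀ i, IsClosed (XX i) := by
    intro i; rw [hfst]; split_ifs
    · exact hPcl
    · exact isClosed_le continuous_infEdist continuous_infEdist
    · exact isClosed_univ
  have hYcl : ∀ i, IsClosed (YY i) := by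
    intro i; rw [hsnd]; split_ifs
    · exact isClosed_univ
    · exact isClosed_le continuous_infEdist continuous_infEdist
    · exact hQcl
  -- chains
  have hXstep : ∀ i, XX i ⊆ XX (i + 1) := by
    intro i
    rcases lt_or_ge (i + 1) k with h | h
    · rw [hXe (i + 1) (by omega) h]
      intro z hz
      simp only [Nat.add_sub_cancel, mem_setOf_eq, infEdist_zero_of_mem hz]
      exact (infEdist_zero_of_mem hz).trans_le zero_le
    · rw [hXuniv _ h]; exact subset_univ _
  have hYstep : ∀ i, YY (i + 1) ⊆ YY i := by
    intro i
    rcases Nat.eq_zero_or_pos i with rfl | hpos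
    · rw [hY0]; exact subset_univ _
    rcases lt_or_ge i k with h | h
    · rw [hYe i hpos h]
      intro z hz
      simp only [mem_setOf_eq, infEdist_zero_of_mem hz]
      exact (infEdist_zero_of_mem hz).trans_le zero_le
    · rw [hYQ i h, hYQ (i + 1) (by omega)]
  have hXmono : ∀ a b, a ≤ b → XX a ⊆ XX b := by
    intro a b hab
    induction hab with
    | refl => exact subset_rfl
    | step _ ih => exact ih.trans (hXstep _)
  have hYmono : ∀ a b, a ≤ b → YY b ⊆ YY a := by
    intro a b hab
    induction hab with
    | refl => exact subset_rfl
    | step _ ih => exact (hYstep _).trans ih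
  have hPsub : ∀ i, P ⊆ XX i := fun i => hX0 ▸ hXmono 0 i (Nat.zero_le i)
  have hQsub : ∀ i, Q ⊆ YY i := by
    intro i
    rcases le_or_gt i k with h | h
    · exact (hYQ k le_rfl) ▸ hYmono i k h
    · rw [hYQ i h.le]
  have hunion : ∀ i, XX i ∪ YY i = univ := by
    intro i
    rcases Nat.eq_zero_or_pos i with rfl | hpos
    · rw [hY0, union_univ]
    rcases lt_or_ge i k with hik | hik
    · rw [hXe i hpos hik, hYe i hpos hik]
      ext z
      simp only [mem_union, mem_setOf_eq, mem_univ, iff_true]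
      exact le_total _ _
    · rw [hXuniv i hik, univ_union]
  have hXne : ∀ i, (XX i).Nonempty := fun i => ⟨p, hPsub i hp⟩
  have hYne : ∀ i, (YY i).Nonempty := fun i => ⟨q, hQsub i hq⟩
  have hCne : ∀ i, (XX i ∩ YY i).Nonempty := by
    intro i
    obtain ⟨e, he, -⟩ := seg_cross (hXcl i) (hYcl i) (hunion i) (hPsub i hp) (hQsub i hq)
    exact ⟨e, he⟩
  have hCcl : ∀ i, IsClosed (XX i ∩ YY i) := fun i => (hXcl i).inter (hYcl i)
  have LemA1 : ∀ i, ∀ z ∈ XX i, infDist z (XX i ∩ YY i) = infDist z (YY i) :=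
    fun i z hz => infDist_inter_eq (hXcl i) (hYcl i) (hunion i) (hYne i) hz
  have LemA2 : ∀ i, ∀ z ∈ YY i, infDist z (XX i ∩ YY i) = infDist z (XX i) := by
    intro i z hz
    rw [inter_comm]
    exact infDist_inter_eq (hYcl i) (hXcl i) (by rw [union_comm]; exact hunion i) (hXne i) hz
  -- disjointness of far left and right regions
  have hdesc : ∀ a b, a < b → b ≤ k → ∀ z, z ∈ XX a → z ∈ YY b → z ∈ P := by
    intro a
    induction a with
    | zero => intro b _ _ z hz _; rwa [hX0] at hz
    | succ n ih =>
      intro b hab hbk z hz hzb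
      rw [hXe (n + 1) (by omega) (by omega)] at hz
      simp only [Nat.add_sub_cancel, mem_setOf_eq] at hz
      have hz2 : z ∈ YY (n + 2) := hYmono (n + 2) b (by omega) hzb
      have h0 : infEdist z (YY (n + 2)) = 0 := infEdist_zero_of_mem hz2
      have hzn : z ∈ XX n := by
        rw [mem_iff_infEdist_zero_of_closed (hXcl n)]
        exact le_antisymm (h0 ▸ hz) zero_le
      exact ih b (by omega) hbk z hzn hzb
  have hasc : ∀ m b, b + m = k → 0 < b → ∀ z, z ∈ P → z ∈ YY b → z ∈ Q := by
    intro m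
    induction m with
    | zero =>
      intro b hb _ z _ hzb
      rwa [show b = k by omega, hYQ k le_rfl] at hzb
    | succ n ih =>
      intro b hb hbpos z hzP hzb
      rw [hYe b hbpos (by omega)] at hzb
      simp only [mem_setOf_eq] at hzb
      have h0 : infEdist z (XX (b - 1)) = 0 := infEdist_zero_of_mem (hPsub _ hzP)
      have hz1 : z ∈ YY (b + 1) := by
        rw [mem_iff_infEdist_zero_of_closed (hYcl (b + 1))]
        exact le_antisymm (le_trans hzb (le_of_eq h0)) zero_le
      exact ih (b + 1) (by omega) (by omega) z hzP hz1
  have LemC : ∀ a b, a < b → b ≤ k → ∀ z, z ∈ XX a → z ∈ YY b → False := by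
    intro a b hab hbk z hza hzb
    have hzP : z ∈ P := hdesc a b hab hbk z hza hzb
    have hzQ : z ∈ Q := hasc (k - b) b (by omega) (by omega) z hzP
      (hYmono b b le_rfl hzb)
    exact Set.disjoint_left.mp hPQ hzP hzQ
  -- the main bisector identity
  have main : ∀ m, m + 1 < k →
      XX (m + 1) ∩ YY (m + 1) = bisect (XX m ∩ YY m) (XX (m + 2) ∩ YY (m + 2)) := by
    intro m hmk
    have hXmne := hXne m
    have hY2ne := hYne (m + 2)
    ext z
    simp only [bisect, mem_setOf_eq, mem_inter_iff]
    constructor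
    · rintro ⟨hzX, hzY⟩
      have h1 : infEdist z (XX m) ≤ infEdist z (YY (m + 2)) := by
        rw [hXe (m + 1) (by omega) hmk] at hzX
        simpa using hzX
      have h2 : infEdist z (YY (m + 2)) ≤ infEdist z (XX m) := by
        rw [hYe (m + 1) (by omega) hmk] at hzY
        simpa using hzY
      have heq : infDist z (XX m) = infDist z (YY (m + 2)) := by
        rw [infDist, infDist]; exact congrArg ENNReal.toReal (le_antisymm h1 h2)
      have e1 : infDist z (XX m ∩ YY m) = infDist z (XX m) :=
        LemA2 m z (hYmono m (m + 1) (by omega) hzY)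
      have e2 : infDist z (XX (m + 2) ∩ YY (m + 2)) = infDist z (YY (m + 2)) :=
        LemA1 (m + 2) z (hXmono (m + 1) (m + 2) (by omega) hzX)
      rw [e1, e2, heq]
    · intro hzeq
      by_cases hz1 : z ∈ YY m
      · by_cases hz2 : z ∈ XX (m + 2)
        · -- the regular case
          have e1 : infDist z (XX m ∩ YY m) = infDist z (XX m) := LemA2 m z hz1
          have e2 : infDist z (XX (m + 2) ∩ YY (m + 2)) = infDist z (YY (m + 2)) :=
            LemA1 (m + 2) z hz2
          have heq : infDist z (XX m) = infDist z (YY (m + 2)) := by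
            rw [← e1, ← e2, hzeq]
          have hed : infEdist z (XX m) = infEdist z (YY (m + 2)) :=
            (ENNReal.toReal_eq_toReal_iff' (infEdist_ne_top hXmne)
              (infEdist_ne_top hY2ne)).mp heq
          constructor
          · rw [hXe (m + 1) (by omega) hmk]
            simpa using le_of_eq hed
          · rw [hYe (m + 1) (by omega) hmk]
            simpa using le_of_eq hed.symm
        · -- impossible: z strictly to the right of the (m+2)-nd region
          exfalso
          have hzY2 : z ∈ YY (m + 2) := by
            have hu : z ∈ XX (m + 2) ∪ YY (m + 2) := by rw [hunion (m + 2)]; trivial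
            exact hu.resolve_left hz2
          have hrpos : 0 < infDist z (XX (m + 2) ∩ YY (m + 2)) := by
            rcases eq_or_lt_of_le (infDist_nonneg (s := XX (m + 2) ∩ YY (m + 2)) (x := z))
              with h0 | h0
            · exfalso
              exact hz2 (((hCcl (m + 2)).mem_iff_infDist_zero (hCne (m + 2))).mpr h0.symm).1
            · exact h0
          obtain ⟨c, hcC, hc⟩ := (hCcl m).exists_infDist_eq_dist (hCne m) z
          have hdzc : dist z c = infDist z (XX (m + 2) ∩ YY (m + 2)) := by
            rw [← hc, hzeq]
          have hcX2 : c ∈ XX (m + 2) := hXmono m (m + 2) (by omega) hcC.1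
          obtain ⟨e, ⟨heY, heX⟩, -, heeq⟩ := seg_cross (hYcl (m + 2)) (hXcl (m + 2))
            (by rw [union_comm]; exact hunion (m + 2)) hzY2 hcX2
          have h5 : infDist z (XX (m + 2) ∩ YY (m + 2)) ≤ dist z e :=
            infDist_le_dist_of_mem ⟨heX, heY⟩
          have hec : e = c := heeq (by rw [hdzc]; exact h5)
          exact LemC m (m + 2) (by omega) (by omega) c hcC.1 (hec ▸ heY)
      · -- impossible: z strictly to the left of the m-th region
        exfalso
        have hzXm : z ∈ XX m := by
          have hu : z ∈ XX m ∪ YY m := by rw [hunion m]; trivial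
          exact hu.resolve_right hz1
        have hrpos : 0 < infDist z (XX m ∩ YY m) := by
          rcases eq_or_lt_of_le (infDist_nonneg (s := XX m ∩ YY m) (x := z)) with h0 | h0
          · exfalso
            exact hz1 (((hCcl m).mem_iff_infDist_zero (hCne m)).mpr h0.symm).2
          · exact h0
        obtain ⟨c, hcC, hc⟩ := (hCcl (m + 2)).exists_infDist_eq_dist (hCne (m + 2)) z
        have hdzc : dist z c = infDist z (XX m ∩ YY m) := by
          rw [← hc, ← hzeq]
        have hcYm : c ∈ YY m := hYmono m (m + 2) (by omega) hcC.2
        obtain ⟨e, ⟨heX, heY⟩, -, heeq⟩ := seg_cross (hXcl m) (hYcl m) (hunion m) hzXm hcYm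
        have h5 : infDist z (XX m ∩ YY m) ≤ dist z e := infDist_le_dist_of_mem ⟨heX, heY⟩
        have hec : e = c := heeq (by rw [hdzc]; exact h5)
        exact LemC m (m + 2) (by omega) (by omega) c (hec ▸ heX) hcC.2
  refine ⟨fun i => XX i ∩ YY i, ?_, ?_, ?_⟩
  · show XX 0 ∩ YY 0 = P
    rw [hX0, hY0, inter_univ]
  · show XX k ∩ YY k = Q
    rw [hXuniv k le_rfl, hYQ k le_rfl, univ_inter]
  intro i h0 hik
  obtain ⟨m, rfl⟩ : ∃ m, i = m + 1 := ⟨i - 1, by omega⟩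
  exact ⟨hCne (m + 1), main m hik⟩
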